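/- Let A_1 → A_2 → A_3 → 0 be an exact sequence of abelian groups and let ℓ be a prime. If the ℓ-torsion subgroup of A_3 is finite, then the induced sequence of ℓ-adic completions A_1^{(ℓ)} → A_2^{(ℓ)} → A_3^{(ℓ)} → 0 is exact. -/

import Mathlib

set_option maxHeartbeats 1000000

/-!
Abstract framework for the arithmetic duality / weak approximation statements of
"Obstructions to weak approximation for reductive groups over p-adic function fields".

Objects which are not available in Mathlib (étale hypercohomology of complexes of
tori, completions of a function field at closed points of a curve, ...) are taken
as abstract data; the groups occurring in the statements are modelled by abstract
abelian (or topological) groups, and the canonical maps between them by abstract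
homomorphisms, as documented in the docstrings.
-/

/-- The group `ℚ/ℤ`, realised as `ℚ` modulo the subgroup generated by `1`. -/
abbrev QZ : Type := AddCircle (1 : ℚ)

/-- The dual `A^D = Hom(A, ℚ/ℤ)` of an abelian group `A`; for a discrete torsion
group (the case in which this is used) this coincides with the group of
*continuous* homomorphisms to `ℚ/ℤ`. -/
abbrev qzDual (A : Type) [AddCommGroup A] : Type := A →+ QZ

/-- A bilinear pairing `A × B → ℚ/ℤ` is perfect if both induced adjoint maps
`A → Hom(B, ℚ/ℤ)` and `B → Hom(A, ℚ/ℤ)` are bijective. -/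
def IsPerfectPairing {A B : Type} [AddCommGroup A] [AddCommGroup B]
    (f : A →+ B →+ QZ) : Prop :=
  Function.Bijective (fun a : A => f a) ∧ Function.Bijective (fun b : B => f.flip b)

/-- The left kernel of the pairing `f` is a divisible group. -/
def LeftKernelDivisible {A B : Type} [AddCommGroup A] [AddCommGroup B]
    (f : A →+ B →+ QZ) : Prop :=
  ∀ a : A, f a = 0 → ∀ n : ℕ, 0 < n → ∃ a' : A, f a' = 0 ∧ n • a' = a

/-- The subgroup `m•A` of an abelian group `A`. -/
def zsmulRange (m : ℤ) (A : Type) [AddCommGroup A] : AddSubgroup A where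
  carrier := { x | ∃ a : A, m • a = x }
  zero_mem' := ⟨0, smul_zero m⟩
  add_mem' := by
    rintro x y ⟨a, rfl⟩ ⟨b, rfl⟩
    exact ⟨a + b, smul_add m a b⟩
  neg_mem' := by
    rintro x ⟨a, rfl⟩
    exact ⟨-a, smul_neg m a⟩

lemma mem_zsmulRange {m : ℤ} {A : Type} [AddCommGroup A] {x : A} :
    x ∈ zsmulRange m A ↔ ∃ a : A, m • a = x := Iff.rfl

/-- The `m`-torsion subgroup `_m A` of an abelian group `A`. -/
def torsionBy (m : ℤ) (A : Type) [AddCommGroup A] : AddSubgroup A where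
  carrier := { x | m • x = 0 }
  zero_mem' := smul_zero m
  add_mem' := by
    intro x y hx hy
    simp only [Set.mem_setOf_eq, smul_add] at *
    rw [hx, hy, add_zero]
  neg_mem' := by
    intro x hx
    simp only [Set.mem_setOf_eq, smul_neg] at *
    rw [hx, neg_zero]

lemma mem_torsionBy {m : ℤ} {A : Type} [AddCommGroup A] {x : A} :
    x ∈ torsionBy m A ↔ m • x = 0 := Iff.rfl

/-- The `ℓ`-primary torsion subgroup `A{ℓ}` of an abelian group `A`. -/
def lPrimary (ℓ : ℕ) (A : Type) [AddCommGroup A] : AddSubgroup A where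
  carrier := { a | ∃ n : ℕ, ((ℓ : ℤ) ^ n) • a = 0 }
  zero_mem' := ⟨0, smul_zero _⟩
  add_mem' := by
    rintro a b ⟨m, hm⟩ ⟨n, hn⟩
    refine ⟨m + n, ?_⟩
    have ha : ((ℓ : ℤ) ^ (m + n)) • a = 0 := by
      rw [pow_add, mul_comm, mul_smul, hm, smul_zero]
    have hb : ((ℓ : ℤ) ^ (m + n)) • b = 0 := by
      rw [pow_add, mul_smul, hn, smul_zero]
    rw [smul_add, ha, hb, add_zero]
  neg_mem' := by
    rintro a ⟨n, hn⟩
    exact ⟨n, by rw [smul_neg, hn, neg_zero]⟩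

/-- The quotient `A/mA`. -/
abbrev ModM (m : ℤ) (A : Type) [AddCommGroup A] : Type := A ⧸ zsmulRange m A

lemma zsmulRange_pow_succ_le (ℓ : ℕ) (n : ℕ) (A : Type) [AddCommGroup A] :
    zsmulRange ((ℓ : ℤ) ^ (n + 1)) A ≤ zsmulRange ((ℓ : ℤ) ^ n) A := by
  intro x hx
  rcases mem_zsmulRange.1 hx with ⟨a, rfl⟩
  exact mem_zsmulRange.2 ⟨(ℓ : ℤ) • a, by rw [← mul_smul, ← pow_succ]⟩

/-- Transition map `A/ℓ^{n+1}A → A/ℓ^nA`. -/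
def modTrans (ℓ : ℕ) (n : ℕ) (A : Type) [AddCommGroup A] :
    ModM ((ℓ : ℤ) ^ (n + 1)) A →+ ModM ((ℓ : ℤ) ^ n) A :=
  QuotientAddGroup.map _ _ (AddMonoidHom.id A)
    (fun x hx => AddSubgroup.mem_comap.2 (zsmulRange_pow_succ_le ℓ n A hx))

/-- The `ℓ`-adic completion `A^{(ℓ)} = lim_n A/ℓ^n A`, realised as the subgroup of
compatible families in `∏_n A/ℓ^n A`. -/
def lAdicCarrier (ℓ : ℕ) (A : Type) [AddCommGroup A] :
    AddSubgroup (∀ n : ℕ, ModM ((ℓ : ℤ) ^ n) A) where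
  carrier := { f | ∀ n, modTrans ℓ n A (f (n + 1)) = f n }
  zero_mem' := fun n => by simp
  add_mem' := by
    intro f g hf hg n
    simp only [Pi.add_apply, map_add, hf n, hg n]
  neg_mem' := by
    intro f hf n
    simp only [Pi.neg_apply, map_neg, hf n]

/-- The `ℓ`-adic completion `A^{(ℓ)}` of an abelian group `A`. -/
abbrev LAdic (ℓ : ℕ) (A : Type) [AddCommGroup A] : Type := ↥(lAdicCarrier ℓ A)


@[simp] lemma modTrans_mk (ℓ n : ℕ) (A : Type) [AddCommGroup A] (a : A) :
    modTrans ℓ n A (QuotientAddGroup.mk a) = QuotientAddGroup.mk a :=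
  QuotientAddGroup.map_mk _ _ _ _ a

/-- The canonical map `A → A^{(ℓ)}`. -/
def toLAdic (ℓ : ℕ) (A : Type) [AddCommGroup A] : A →+ LAdic ℓ A where
  toFun a := ⟨fun _ => QuotientAddGroup.mk a, fun n => modTrans_mk ℓ n A a⟩
  map_zero' := Subtype.ext <| funext fun _ => QuotientAddGroup.mk_zero _
  map_add' a b := Subtype.ext <| funext fun _ => QuotientAddGroup.mk_add _ a b

lemma zsmulRange_le_comap (m : ℤ) {A B : Type} [AddCommGroup A] [AddCommGroup B]
    (f : A →+ B) : zsmulRange m A ≤ (zsmulRange m B).comap f := by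
  intro x hx
  rcases mem_zsmulRange.1 hx with ⟨a, rfl⟩
  exact AddSubgroup.mem_comap.2 (mem_zsmulRange.2 ⟨f a, by rw [← map_zsmul]⟩)

/-- The map `A/mA → B/mB` induced by `f : A → B`. -/
def modMap (m : ℤ) {A B : Type} [AddCommGroup A] [AddCommGroup B] (f : A →+ B) :
    ModM m A →+ ModM m B :=
  QuotientAddGroup.map _ _ f (zsmulRange_le_comap m f)

@[simp] lemma modMap_mk (m : ℤ) {A B : Type} [AddCommGroup A] [AddCommGroup B]
    (f : A →+ B) (a : A) :
    modMap m f (QuotientAddGroup.mk a) = QuotientAddGroup.mk (f a) :=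
  QuotientAddGroup.map_mk _ _ _ _ a

/-- The map `A^{(ℓ)} → B^{(ℓ)}` induced functorially by `f : A → B`. -/
def LAdicMap (ℓ : ℕ) {A B : Type} [AddCommGroup A] [AddCommGroup B] (f : A →+ B) :
    LAdic ℓ A →+ LAdic ℓ B where
  toFun x := ⟨fun n => modMap ((ℓ : ℤ) ^ n) f (x.1 n), by
    intro n
    have h1 : ∀ c : ModM ((ℓ : ℤ) ^ (n + 1)) A,
        modTrans ℓ n B (modMap ((ℓ : ℤ) ^ (n + 1)) f c)
          = modMap ((ℓ : ℤ) ^ n) f (modTrans ℓ n A c) := by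
      intro c
      refine QuotientAddGroup.induction_on c fun a => ?_
      rw [modMap_mk, modTrans_mk, modTrans_mk, modMap_mk]
    rw [h1, x.2 n]⟩
  map_zero' := Subtype.ext <| funext fun n => by
    show modMap ((ℓ : ℤ) ^ n) f ((0 : LAdic ℓ A).1 n) = 0
    simp only [ZeroMemClass.coe_zero, Pi.zero_apply, map_zero]
  map_add' x y := Subtype.ext <| funext fun n => by
    show modMap ((ℓ : ℤ) ^ n) f ((x + y).1 n) = (_ + _ : LAdic ℓ B).1 n
    simp only [AddSubgroup.coe_add, Pi.add_apply, map_add]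
/-- The profinite completion `A^∧ = lim_{H of finite index} A/H`, realised as the
subgroup of compatible families. -/
def profiniteCarrier (A : Type) [AddCommGroup A] :
    AddSubgroup (∀ H : {H : AddSubgroup A // H.FiniteIndex}, A ⧸ H.1) where
  carrier := { f | ∀ (H H' : {H : AddSubgroup A // H.FiniteIndex}) (h : H.1 ≤ H'.1),
      QuotientAddGroup.map H.1 H'.1 (AddMonoidHom.id A)
        (fun x hx => AddSubgroup.mem_comap.2 (h hx)) (f H) = f H' }
  zero_mem' := fun H H' h => by simp
  add_mem' := by
    intro f g hf hg H H' h
    simp only [Pi.add_apply, map_add, hf H H' h, hg H H' h]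
  neg_mem' := by
    intro f hf H H' h
    simp only [Pi.neg_apply, map_neg, hf H H' h]

/-- The profinite completion `A^∧` of an abelian group `A`. -/
abbrev ProfiniteCompletion (A : Type) [AddCommGroup A] : Type := ↥(profiniteCarrier A)

/-- The canonical map `A → A^∧`. -/
def toProfiniteCompletion (A : Type) [AddCommGroup A] : A →+ ProfiniteCompletion A where
  toFun a := ⟨fun _ => QuotientAddGroup.mk a, fun H H' h => by
    simp [QuotientAddGroup.map_mk]⟩
  map_zero' := by apply Subtype.ext; funext H; simp
  map_add' a b := by apply Subtype.ext; funext H; rfl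

/-- Given local restriction maps `loc v : H → H_v`, the subgroup of classes that are
locally trivial outside the finite set `S` (the group `Ш_S`). -/
def shaOutside {H : Type} [AddCommGroup H] {V : Type} {Hv : V → Type}
    [∀ v, AddCommGroup (Hv v)] (loc : ∀ v, H →+ Hv v) (S : Finset V) : AddSubgroup H :=
  ⨅ (v : V) (_ : v ∉ S), AddMonoidHom.ker (loc v)

/-- The Tate–Shafarevich group `Ш`: classes that are locally trivial everywhere. -/
def sha {H : Type} [AddCommGroup H] {V : Type} {Hv : V → Type}
    [∀ v, AddCommGroup (Hv v)] (loc : ∀ v, H →+ Hv v) : AddSubgroup H :=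
  ⨅ v : V, AddMonoidHom.ker (loc v)

/-- The group `Ш_ω`: classes that are locally trivial at all but finitely many places. -/
def shaOmega {H : Type} [AddCommGroup H] {V : Type} {Hv : V → Type}
    [∀ v, AddCommGroup (Hv v)] (loc : ∀ v, H →+ Hv v) : AddSubgroup H :=
  ⨆ S : Finset V, shaOutside loc S


open CategoryTheory in
private lemma nat_koenig {F : ℕ → Type} [∀ n, Finite (F n)] [∀ n, Nonempty (F n)]
    (t : ∀ n, F (n + 1) → F n) :
    ∃ s : ∀ n, F n, ∀ n, t n (s (n + 1)) = s n := by
  let Fc : ℕᵒᵖ ⥤ Type := Functor.ofOpSequence (fun n => TypeCat.ofHom (t n))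
  have h1 : ∀ j : ℕᵒᵖ, Finite (Fc.obj j) := fun j => by
    show Finite (F j.unop); infer_instance
  have h2 : ∀ j : ℕᵒᵖ, Nonempty (Fc.obj j) := fun j => by
    show Nonempty (F j.unop); infer_instance
  obtain ⟨s, hs⟩ := nonempty_sections_of_finite_inverse_system Fc
  refine ⟨fun n => s (Opposite.op n), fun n => ?_⟩
  have := hs ((homOfLE (Nat.le_add_right n 1)).op :
    Opposite.op (n + 1) ⟶ Opposite.op n)
  rwa [Functor.ofOpSequence_map_homOfLE_succ] at this

private lemma torsion_pow_finite {A3 : Type} [AddCommGroup A3] (ℓ : ℕ)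
    (hfin : Set.Finite {c : A3 | (ℓ : ℤ) • c = 0}) (n : ℕ) :
    Set.Finite {c : A3 | ((ℓ : ℤ) ^ n) • c = 0} := by
  induction n with
  | zero =>
      refine Set.Finite.subset (Set.finite_singleton 0) ?_
      intro c hc
      simp only [Set.mem_setOf_eq, pow_zero, one_smul] at hc
      simpa using hc
  | succ n ih =>
      classical
      set r : A3 → A3 := fun d =>
        if h : ∃ c : A3, ((ℓ : ℤ) ^ (n + 1)) • c = 0 ∧ (ℓ : ℤ) • c = d then h.choose else 0
        with hr
      refine Set.Finite.subset (((ih.prod hfin).image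
        (fun p : A3 × A3 => r p.1 + p.2))) ?_
      intro c hc
      have hc' : ((ℓ : ℤ) ^ (n + 1)) • c = 0 := hc
      have hd : ((ℓ : ℤ) ^ n) • ((ℓ : ℤ) • c) = 0 := by
        rw [← mul_smul, ← pow_succ]; exact hc'
      have hex : ∃ c' : A3, ((ℓ : ℤ) ^ (n + 1)) • c' = 0 ∧ (ℓ : ℤ) • c' = (ℓ : ℤ) • c :=
        ⟨c, hc', rfl⟩
      refine ⟨⟨(ℓ : ℤ) • c, c - r ((ℓ : ℤ) • c)⟩, ⟨hd, ?_⟩, by simp⟩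
      have hspec := hex.choose_spec
      simp only [Set.mem_setOf_eq, smul_sub]
      rw [hr]
      simp only [dif_pos hex]
      rw [hspec.2, sub_self]

/-- Let `A₁ → A₂ → A₃ → 0` be an exact sequence of abelian groups
and let `ℓ` be a prime.  If the `ℓ`-torsion subgroup of `A₃` is finite, then the
induced sequence of `ℓ`-adic completions `A₁^{(ℓ)} → A₂^{(ℓ)} → A₃^{(ℓ)} → 0` is
exact. -/
theorem ladic_completion_right_exact
    (A1 A2 A3 : Type) [AddCommGroup A1] [AddCommGroup A2] [AddCommGroup A3]
    (f : A1 →+ A2) (g : A2 →+ A3)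
    (hexact : Function.Exact ⇑f ⇑g) (hsurj : Function.Surjective ⇑g)
    (ℓ : ℕ) (hℓ : ℓ.Prime)
    (hfin : Finite ↥(torsionBy (ℓ : ℤ) A3)) :
    Function.Exact ⇑(LAdicMap ℓ f) ⇑(LAdicMap ℓ g) ∧
      Function.Surjective ⇑(LAdicMap ℓ g) := by
  classical
  -- Surjectivity of the induced map on completions.
  have hGsurj : Function.Surjective ⇑(LAdicMap ℓ g) := by
    intro y
    have key : ∀ (n : ℕ) (a : A2),
        (QuotientAddGroup.mk (g a) : ModM ((ℓ : ℤ) ^ n) A3) = y.1 n →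
        ∃ a' : A2,
          (QuotientAddGroup.mk (g a') : ModM ((ℓ : ℤ) ^ (n + 1)) A3) = y.1 (n + 1) ∧
          ∃ d : A2, a' - a = ((ℓ : ℤ) ^ n) • d := by
      intro n a ha
      obtain ⟨c, hc⟩ := QuotientAddGroup.mk_surjective (y.1 (n + 1))
      have hcompat : (QuotientAddGroup.mk c : ModM ((ℓ : ℤ) ^ n) A3)
          = QuotientAddGroup.mk (g a) := by
        rw [ha, ← y.2 n, ← hc, modTrans_mk]
      obtain ⟨c3, hc3⟩ := QuotientAddGroup.eq_iff_sub_mem.1 hcompat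
      obtain ⟨d, hd⟩ := hsurj c3
      refine ⟨a + ((ℓ : ℤ) ^ n) • d, ?_, d, by abel⟩
      have hga : g (a + ((ℓ : ℤ) ^ n) • d) = c := by
        rw [map_add, map_zsmul, hd, hc3]; abel
      rw [hga, hc]
    have h0 : (QuotientAddGroup.mk (g 0) : ModM ((ℓ : ℤ) ^ 0) A3) = y.1 0 := by
      obtain ⟨c, hc⟩ := QuotientAddGroup.mk_surjective (y.1 0)
      rw [← hc]
      refine QuotientAddGroup.eq_iff_sub_mem.2 ⟨g 0 - c, ?_⟩
      rw [pow_zero, one_smul]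
    let seq : ∀ n : ℕ,
        {a : A2 // (QuotientAddGroup.mk (g a) : ModM ((ℓ : ℤ) ^ n) A3) = y.1 n} :=
      fun n => Nat.rec ⟨0, h0⟩
        (fun n p => ⟨(key n p.1 p.2).choose, (key n p.1 p.2).choose_spec.1⟩) n
    have hlink : ∀ n, ∃ d : A2, (seq (n + 1)).1 - (seq n).1 = ((ℓ : ℤ) ^ n) • d :=
      fun n => (key n (seq n).1 (seq n).2).choose_spec.2
    refine ⟨⟨fun n => QuotientAddGroup.mk (seq n).1, ?_⟩, ?_⟩
    · intro n
      rw [modTrans_mk]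
      exact QuotientAddGroup.eq_iff_sub_mem.2 ((hlink n).imp fun d hd => hd.symm)
    · apply Subtype.ext
      funext n
      show modMap ((ℓ : ℤ) ^ n) g (QuotientAddGroup.mk (seq n).1) = y.1 n
      rw [modMap_mk]
      exact (seq n).2
  constructor
  · intro w
    constructor
    · -- the hard direction: kernel ⊆ range
      intro hw0
      have hw : ∀ n, modMap ((ℓ : ℤ) ^ n) g (w.1 n) = 0 := by
        intro n
        have := congrFun (congrArg Subtype.val hw0) n
        exact this
      -- Step A: good representatives of `w`.
      have hbex : ∀ n, ∃ b : A2, g b = 0 ∧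
          (QuotientAddGroup.mk b : ModM ((ℓ : ℤ) ^ n) A2) = w.1 n := by
        intro n
        obtain ⟨c, hc⟩ := QuotientAddGroup.mk_surjective (w.1 n)
        have h1 : (QuotientAddGroup.mk (g c) : ModM ((ℓ : ℤ) ^ n) A3) = 0 := by
          rw [← modMap_mk ((ℓ : ℤ) ^ n) g c, hc]; exact hw n
        obtain ⟨c3, hc3⟩ := (QuotientAddGroup.eq_zero_iff _).1 h1
        obtain ⟨d, hd⟩ := hsurj c3
        refine ⟨c - ((ℓ : ℤ) ^ n) • d, ?_, ?_⟩
        · rw [map_sub, map_zsmul, hd, hc3, sub_self]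
        · rw [← hc]
          refine QuotientAddGroup.eq_iff_sub_mem.2 ⟨-d, ?_⟩
          rw [smul_neg]; abel
      choose b hb1 hb2 using hbex
      -- Step B: the tower of quotients `A2 / f(ℓ^n A1)`.
      let K : ℕ → AddSubgroup A2 := fun n =>
        AddSubgroup.map f (zsmulRange ((ℓ : ℤ) ^ n) A1)
      have hKle : ∀ n, K n ≤ zsmulRange ((ℓ : ℤ) ^ n) A2 := by
        intro n x hx
        obtain ⟨a, ha, rfl⟩ := AddSubgroup.mem_map.1 hx
        obtain ⟨e, rfl⟩ := ha
        exact ⟨f e, (map_zsmul f _ _).symm⟩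
      have hKmono : ∀ n, K (n + 1) ≤ K n := fun n =>
        AddSubgroup.map_mono (zsmulRange_pow_succ_le ℓ n A1)
      let Q : ℕ → Type := fun n => A2 ⧸ K n
      let θ : ∀ n, Q n →+ ModM ((ℓ : ℤ) ^ n) A2 := fun n =>
        QuotientAddGroup.map _ _ (AddMonoidHom.id A2) (fun x hx => hKle n hx)
      let π : ∀ n, Q (n + 1) →+ Q n := fun n =>
        QuotientAddGroup.map _ _ (AddMonoidHom.id A2) (fun x hx => hKmono n hx)
      have hθmk : ∀ n (c : A2), θ n (QuotientAddGroup.mk c)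
          = (QuotientAddGroup.mk c : ModM ((ℓ : ℤ) ^ n) A2) :=
        fun n c => QuotientAddGroup.map_mk _ _ _ _ c
      have hπmk : ∀ n (c : A2), π n (QuotientAddGroup.mk c)
          = (QuotientAddGroup.mk c : Q n) :=
        fun n c => QuotientAddGroup.map_mk _ _ _ _ c
      -- finiteness of torsion
      have hTfin : ∀ n, Set.Finite {c : A3 | ((ℓ : ℤ) ^ n) • c = 0} := by
        refine torsion_pow_finite ℓ ?_
        have h1 : Finite ↥({c : A3 | (ℓ : ℤ) • c = 0}) := hfin
        exact Set.finite_coe_iff.1 h1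
      -- finiteness of the image of `ker g ∩ ℓ^n A2` in `Q n`
      let S : ℕ → Set A2 := fun n => {c | g c = 0 ∧ ∃ a2 : A2, ((ℓ : ℤ) ^ n) • a2 = c}
      let I : ∀ n, Set (Q n) := fun n => QuotientAddGroup.mk '' S n
      have hIfin : ∀ n, (I n).Finite := by
        intro n
        rw [← Set.finite_coe_iff]
        have hrep : ∀ q : ↥(I n), ∃ a : A2,
            g (((ℓ : ℤ) ^ n) • a) = 0 ∧
            (QuotientAddGroup.mk (((ℓ : ℤ) ^ n) • a) : Q n) = q.1 := by
          rintro ⟨q, c, ⟨hc0, a, rfl⟩, rfl⟩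
          exact ⟨a, hc0, rfl⟩
        choose rep hrep1 hrep2 using hrep
        have hinj : Function.Injective
            (fun q : ↥(I n) => (⟨g (rep q), by
              show ((ℓ : ℤ) ^ n) • g (rep q) = 0
              rw [← map_zsmul]; exact hrep1 q⟩ :
              {c : A3 | ((ℓ : ℤ) ^ n) • c = 0})) := by
          intro q q' h
          have h' : g (rep q) = g (rep q') := congrArg Subtype.val h
          have h0 : g (rep q - rep q') = 0 := by rw [map_sub, h', sub_self]
          obtain ⟨e, he⟩ := (hexact _).1 h0
          apply Subtype.ext
          rw [← hrep2 q, ← hrep2 q']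
          refine QuotientAddGroup.eq_iff_sub_mem.2 ?_
          refine AddSubgroup.mem_map.2 ⟨((ℓ : ℤ) ^ n) • e, ⟨e, rfl⟩, ?_⟩
          rw [map_zsmul, he, smul_sub]
        have hfin2 : Finite ↥{c : A3 | ((ℓ : ℤ) ^ n) • c = 0} := (hTfin n).to_subtype
        exact Finite.of_injective _ hinj
      -- the fibers
      let Fib : ∀ n, Set (Q n) := fun n =>
        {q | (∃ c, g c = 0 ∧ QuotientAddGroup.mk c = q) ∧ θ n q = w.1 n}
      have hFibne : ∀ n, (Fib n).Nonempty := by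
        intro n
        refine ⟨QuotientAddGroup.mk (b n), ⟨b n, hb1 n, rfl⟩, ?_⟩
        rw [hθmk n (b n)]
        exact hb2 n
      have hFibfin : ∀ n, (Fib n).Finite := by
        intro n
        refine Set.Finite.subset ((hIfin n).image
          (fun q => QuotientAddGroup.mk (b n) + q)) ?_
        rintro q ⟨⟨c, hc0, rfl⟩, hθq⟩
        rw [hθmk n c] at hθq
        have h1 : (QuotientAddGroup.mk c : ModM ((ℓ : ℤ) ^ n) A2)
            = QuotientAddGroup.mk (b n) := by
          rw [hb2 n, ← hθq]
        obtain ⟨a2, ha2⟩ := QuotientAddGroup.eq_iff_sub_mem.1 h1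
        refine ⟨QuotientAddGroup.mk (c - b n),
          ⟨c - b n, ⟨by rw [map_sub, hc0, hb1 n, sub_self], a2, ha2⟩, rfl⟩, ?_⟩
        show QuotientAddGroup.mk (b n) + QuotientAddGroup.mk (c - b n)
            = (QuotientAddGroup.mk c : Q n)
        rw [← QuotientAddGroup.mk_add]
        congr 1
        abel
      -- König's lemma
      have hstep : ∀ n (p : ↥(Fib (n + 1))), π n p.1 ∈ Fib n := by
        rintro n ⟨q, ⟨c, hc0, rfl⟩, hθq⟩
        rw [hθmk (n + 1) c] at hθq
        refine ⟨⟨c, hc0, (hπmk n c).symm⟩, ?_⟩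
        show θ n (π n (QuotientAddGroup.mk c)) = w.1 n
        rw [hπmk n c, hθmk n c, ← w.2 n, ← hθq, modTrans_mk]
      have hfinF : ∀ n, Finite ↥(Fib n) := fun n => (hFibfin n).to_subtype
      have hneF : ∀ n, Nonempty ↥(Fib n) := fun n => (hFibne n).to_subtype
      obtain ⟨s, hs⟩ := nat_koenig (F := fun n => ↥(Fib n))
        (fun n p => ⟨π n p.1, hstep n p⟩)
      choose β hβ0 hβq using fun n => (s n).2.1
      have hβmod : ∀ n, (QuotientAddGroup.mk (β n) : ModM ((ℓ : ℤ) ^ n) A2)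
          = w.1 n := by
        intro n
        have h1 := (s n).2.2
        rw [← hβq n, hθmk n (β n)] at h1
        exact h1
      have hβlink : ∀ n, ∃ e : A1, f (((ℓ : ℤ) ^ n) • e) = β (n + 1) - β n := by
        intro n
        have h1 : π n (s (n + 1)).1 = (s n).1 := congrArg Subtype.val (hs n)
        rw [← hβq (n + 1), ← hβq n, hπmk n (β (n + 1))] at h1
        obtain ⟨a, ha, hfa⟩ := AddSubgroup.mem_map.1
          (QuotientAddGroup.eq_iff_sub_mem.1 h1)
        obtain ⟨e, rfl⟩ := ha
        exact ⟨e, hfa⟩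
      obtain ⟨c0, hc0⟩ := (hexact (β 0)).1 (hβ0 0)
      choose e he using hβlink
      let cs : ℕ → A1 := fun n =>
        Nat.rec c0 (fun n cn => cn + ((ℓ : ℤ) ^ n) • e n) n
      have hcssucc : ∀ n, cs (n + 1) = cs n + ((ℓ : ℤ) ^ n) • e n := fun n => rfl
      have hcs : ∀ n, f (cs n) = β n := by
        intro n
        induction n with
        | zero => exact hc0
        | succ n ih =>
            rw [hcssucc n, map_add, ih, map_zsmul, ← map_zsmul f, he n]
            abel
      refine ⟨⟨fun n => QuotientAddGroup.mk (cs n), ?_⟩, ?_⟩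
      · intro n
        rw [modTrans_mk]
        refine QuotientAddGroup.eq_iff_sub_mem.2 ⟨e n, ?_⟩
        rw [hcssucc n]
        abel
      · apply Subtype.ext
        funext n
        show modMap ((ℓ : ℤ) ^ n) f (QuotientAddGroup.mk (cs n)) = w.1 n
        rw [modMap_mk, hcs n]
        exact hβmod n
    · -- the easy direction: range ⊆ kernel
      rintro ⟨z, rfl⟩
      apply Subtype.ext
      funext n
      show modMap ((ℓ : ℤ) ^ n) g (modMap ((ℓ : ℤ) ^ n) f (z.1 n)) = 0
      refine QuotientAddGroup.induction_on (z.1 n) fun a => ?_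
      rw [modMap_mk, modMap_mk, hexact.apply_apply_eq_zero a]
      exact QuotientAddGroup.mk_zero _
  · exact hGsurj
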